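/- For z = -n (n a nonnegative integer), the function Γ(z)^P · x^{-z} (x > 0 fixed, P a positive integer) has a pole of order P at z = −n, and its residue there equals ((−1)^{Pn}/(n!)^P) · x^n · (ℓ(x) ⋆ r(n) ⋆ q)_{P−1}, where ℓ_k(x) = (−log x)^k/k!, q is the P-fold discrete convolution power of the sequence {Γ^{(k)}(1)/k!}_{k≥0}, and r(n) is the discrete convolution of the sequences {C(P+k−1,k)/m^k}_{k≥0} for m = 1,…,n (with r(0) = (1,0,0,…)). -/

import Mathlib

open scoped Nat
open Filter Finset

/-- Discrete convolution of two sequences: `(a ⋆ b)_k = ∑_{j=0}^{k} a_j b_{k-j}`. -/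
noncomputable def dconv (a b : ℕ → ℂ) : ℕ → ℂ :=
  fun k => ∑ j ∈ Finset.range (k + 1), a j * b (k - j)

/-- The identity sequence `(1, 0, 0, …)` for discrete convolution. -/
def dconvOne : ℕ → ℂ := fun k => if k = 0 then 1 else 0

/-- `P`-fold discrete convolution power. -/
noncomputable def dconvPow (a : ℕ → ℂ) : ℕ → (ℕ → ℂ)
  | 0 => dconvOne
  | n + 1 => dconv (dconvPow a n) a

/-- The sequence `q`: the `P`-fold convolution power of `{Γ^{(k)}(1)/k!}_{k≥0}`. -/
noncomputable def qSeq (P : ℕ) : ℕ → ℂ :=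
  dconvPow (fun k => iteratedDeriv k Complex.Gamma 1 / (k ! : ℂ)) P

/-- The sequence `r(n)`: the convolution of `{C(P+k-1,k)/m^k}_{k≥0}` over `m = 1,…,n`,
with `r(0) = (1,0,0,…)`. -/
noncomputable def rSeq (P : ℕ) : ℕ → (ℕ → ℂ)
  | 0 => dconvOne
  | m + 1 => dconv (rSeq P m)
      (fun k => ((P + k - 1).choose k : ℂ) / ((m : ℂ) + 1) ^ k)

noncomputable section AuxTay

/-- Taylor expansion predicate with absolute convergence. -/
def Tay (f : ℂ → ℂ) (a : ℕ → ℂ) (c : ℂ) : Prop :=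
  ∀ᶠ w in nhds (0:ℂ), Summable (fun k => ‖a k‖ * ‖w‖ ^ k) ∧
    HasSum (fun k => a k * w ^ k) (f (c + w))

theorem Tay.hasFPowerSeriesAt {f : ℂ → ℂ} {a : ℕ → ℂ} {c : ℂ} (h : Tay f a c) :
    HasFPowerSeriesAt f (FormalMultilinearSeries.ofScalars ℂ a) c := by
  rw [hasFPowerSeriesAt_iff]
  filter_upwards [h] with w hw
  have hc : ∀ k, (FormalMultilinearSeries.ofScalars ℂ a).coeff k = a k := by
    intro k
    simp [FormalMultilinearSeries.coeff, FormalMultilinearSeries.ofScalars,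
      List.prod_ofFn, Pi.one_apply]
  have : (fun n => w ^ n • (FormalMultilinearSeries.ofScalars ℂ a).coeff n)
      = fun n => a n * w ^ n := by
    funext n; rw [hc, smul_eq_mul, mul_comm]
  rw [this]
  exact hw.2

theorem Tay.analyticAt {f : ℂ → ℂ} {a : ℕ → ℂ} {c : ℂ} (h : Tay f a c) :
    AnalyticAt ℂ f c := ⟨_, h.hasFPowerSeriesAt⟩

theorem Tay.iteratedDeriv_eq {f : ℂ → ℂ} {a : ℕ → ℂ} {c : ℂ} (h : Tay f a c) (k : ℕ) :
    iteratedDeriv k f c = (k ! : ℂ) * a k := by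
  obtain ⟨r, hr⟩ := h.hasFPowerSeriesAt
  have h1 := hr.factorial_smul (1 : ℂ) k
  rw [iteratedDeriv_eq_iteratedFDeriv, ← h1]
  simp [FormalMultilinearSeries.ofScalars, nsmul_eq_mul, List.prod_ofFn, Pi.one_apply]

theorem HasFPowerSeriesAt.tay {f : ℂ → ℂ} {p : FormalMultilinearSeries ℂ ℂ ℂ} {c : ℂ}
    (hp : HasFPowerSeriesAt f p c) : Tay f p.coeff c := by
  obtain ⟨r, hr⟩ := hp
  obtain ⟨r', h0r', hr'r⟩ := ENNReal.lt_iff_exists_nnreal_btwn.mp hr.r_pos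
  have hsum := p.summable_norm_mul_pow (hr'r.trans_le hr.r_le)
  have hr'pos : (0:ℝ) < r' := by exact_mod_cast h0r'
  filter_upwards [Metric.ball_mem_nhds (0:ℂ) hr'pos] with w hw
  have hwr : ‖w‖ < r' := by simpa [dist_zero_right] using hw
  constructor
  · refine Summable.of_nonneg_of_le (fun k => by positivity) (fun k => ?_) hsum
    rw [← p.norm_apply_eq_norm_coef]
    gcongr
  · have hball : w ∈ Metric.eball (0:ℂ) r := by
      rw [EMetric.mem_ball, edist_zero_right]
      calc (‖w‖₊ : ENNReal) < r' := by exact_mod_cast hwr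
        _ < r := hr'r
    have := hr.hasSum hball
    have heq : (fun n => p n fun _ => w) = fun n => p.coeff n * w ^ n := by
      funext n
      rw [FormalMultilinearSeries.apply_eq_pow_smul_coeff, smul_eq_mul, mul_comm]
    rwa [heq] at this

theorem Tay.one (c : ℂ) : Tay (fun _ => 1) dconvOne c := by
  refine Filter.Eventually.of_forall fun w => ⟨?_, ?_⟩
  · apply summable_of_ne_finset_zero (s := {0})
    intro k hk
    simp only [Finset.mem_singleton] at hk
    simp [dconvOne, hk]
  · have : HasSum (fun k => dconvOne k * w ^ k) (dconvOne 0 * w ^ 0) := by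
      apply hasSum_single
      intro b hb
      simp [dconvOne, hb]
    simpa [dconvOne] using this

theorem Tay.const_mul {f : ℂ → ℂ} {a : ℕ → ℂ} {c : ℂ} (h : Tay f a c) (s : ℂ) :
    Tay (fun z => s * f z) (fun k => s * a k) c := by
  filter_upwards [h] with w hw
  obtain ⟨h1, h2⟩ := hw
  constructor
  · have := h1.mul_left ‖s‖
    convert this using 1
    case e'_3 => rfl
    funext k; simp [norm_mul, mul_assoc]
  · have := h2.mul_left s
    convert this using 1
    case e'_3 => rfl
    funext k; ring

theorem Tay.mul {f g : ℂ → ℂ} {a b : ℕ → ℂ} {c : ℂ} (hf : Tay f a c) (hg : Tay g b c) :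
    Tay (fun z => f z * g z) (dconv a b) c := by
  filter_upwards [hf, hg] with w hfw hgw
  obtain ⟨hfs, hfh⟩ := hfw
  obtain ⟨hgs, hgh⟩ := hgw
  have hA : Summable fun k => ‖a k * w ^ k‖ := by simpa [norm_mul] using hfs
  have hB : Summable fun k => ‖b k * w ^ k‖ := by simpa [norm_mul] using hgs
  have key : ∀ k, dconv a b k * w ^ k
      = ∑ j ∈ Finset.range (k+1), (a j * w ^ j) * (b (k - j) * w ^ (k - j)) := by
    intro k
    rw [dconv, Finset.sum_mul]
    refine Finset.sum_congr rfl fun j hj => ?_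
    have hjk : j ≤ k := Nat.lt_succ_iff.mp (Finset.mem_range.mp hj)
    have hwp : w ^ j * w ^ (k - j) = w ^ k := by
      rw [← pow_add, Nat.add_sub_cancel' hjk]
    rw [← hwp]; ring
  constructor
  · have h1 := summable_norm_sum_mul_range_of_summable_norm hA hB
    convert h1 using 1
    funext k
    rw [← norm_pow, ← norm_mul, key k]
  · have h2 := hasSum_sum_range_mul_of_summable_norm hA hB
    rw [hfh.tsum_eq, hgh.tsum_eq] at h2
    have : (fun k => dconv a b k * w ^ k)
        = fun k => ∑ j ∈ Finset.range (k+1), (a j * w ^ j) * (b (k - j) * w ^ (k - j)) :=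
      funext key
    rw [this]
    exact h2

theorem Tay.pow {f : ℂ → ℂ} {a : ℕ → ℂ} {c : ℂ} (h : Tay f a c) :
    ∀ P : ℕ, Tay (fun z => f z ^ P) (dconvPow a P) c
  | 0 => by simpa [pow_zero, dconvPow] using Tay.one c
  | (P+1) => by
      have := (Tay.pow h P).mul h
      simpa [pow_succ, dconvPow] using this

end AuxTay

noncomputable section AuxSpecial
open Filter Finset

theorem choose_sum_eq (P k : ℕ) (hP : 0 < P) :
    ∑ j ∈ Finset.range (k+1), (P + j - 1).choose j = (P + k).choose k := by
  have h1 : ∀ j, (P + j - 1).choose j = (P - 1 + j).choose (P - 1) := by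
    intro j
    have e1 : P + j - 1 = P - 1 + j := by omega
    have e2 : P - 1 + j - j = P - 1 := by omega
    have h := Nat.choose_symm (Nat.le_add_left j (P-1))
    rw [e2] at h
    rw [e1, ← h]
  simp_rw [h1]
  have h2 := Nat.sum_Icc_choose (P - 1 + k) (P - 1)
  have h3 : ∑ m ∈ Finset.Icc (P-1) (P-1+k), m.choose (P-1)
      = ∑ j ∈ Finset.range (k+1), (P - 1 + j).choose (P - 1) := by
    rw [← Finset.Ico_add_one_right_eq_Icc, Finset.sum_Ico_eq_sum_range]
    have : P - 1 + k + 1 - (P - 1) = k + 1 := by omega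
    rw [this]
  rw [← h3, h2]
  have e4 : P - 1 + k + 1 = P + k := by omega
  have e5 : P - 1 + 1 = P := by omega
  rw [e4, e5]
  have h6 := Nat.choose_symm (show P ≤ P + k from by omega)
  rw [show P + k - P = k from by omega] at h6
  exact h6.symm

theorem binom_hasSum {P : ℕ} (hP : 0 < P) : ∀ {u : ℂ}, ‖u‖ < 1 →
    HasSum (fun k => ((P + k - 1).choose k : ℂ) * u ^ k) (((1 - u)⁻¹) ^ P) := by
  induction P with
  | zero => omega
  | succ P ih =>
    intro u hu
    rcases Nat.eq_zero_or_pos P with h0 | hPpos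
    · subst h0
      have : (fun k => (((0 + 1 + k - 1).choose k : ℂ)) * u ^ k) = fun k => u ^ k := by
        funext k
        have : 0 + 1 + k - 1 = k := by omega
        rw [this, Nat.choose_self]; simp
      rw [this, pow_one]
      exact hasSum_geometric_of_norm_lt_one hu
    · have hgeom := hasSum_geometric_of_norm_lt_one hu
      have hA : Summable fun k => ‖((P + k - 1).choose k : ℂ) * u ^ k‖ := by
        have hru : ‖((‖u‖ : ℝ) : ℂ)‖ < 1 := by simpa [abs_of_nonneg (norm_nonneg u)] using hu
        have h2 := (ih hPpos hru).summable
        have h3 : (fun k => (((P + k - 1).choose k : ℂ)) * ((‖u‖:ℝ):ℂ) ^ k)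
            = fun k => (((((P + k - 1).choose k : ℝ)) * ‖u‖ ^ k : ℝ) : ℂ) := by
          funext k; push_cast; ring
        rw [h3] at h2
        have h4 := Complex.summable_ofReal.mp h2
        refine h4.congr fun k => ?_
        simp [norm_mul, norm_pow]
      have hB : Summable fun k => ‖u ^ k‖ := by
        simpa [norm_pow] using summable_geometric_of_lt_one (norm_nonneg u) hu
      have h3 := hasSum_sum_range_mul_of_summable_norm hA hB
      rw [(ih hPpos hu).tsum_eq, hgeom.tsum_eq] at h3
      have hfun : (fun k => ∑ j ∈ Finset.range (k+1),
            (((P + j - 1).choose j : ℂ)) * u ^ j * u ^ (k - j))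
          = fun k => ((P + 1 + k - 1).choose k : ℂ) * u ^ k := by
        funext k
        have : ∀ j ∈ Finset.range (k+1),
            (((P + j - 1).choose j : ℂ)) * u ^ j * u ^ (k - j)
              = (((P + j - 1).choose j : ℂ)) * u ^ k := by
          intro j hj
          have hjk : j ≤ k := Nat.lt_succ_iff.mp (Finset.mem_range.mp hj)
          rw [mul_assoc, ← pow_add, Nat.add_sub_cancel' hjk]
        rw [Finset.sum_congr rfl this, ← Finset.sum_mul, ← Nat.cast_sum]
        rw [choose_sum_eq P k hPpos]
        have : P + 1 + k - 1 = P + k := by omega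
        rw [this]
      rw [hfun] at h3
      have : ((1 - u)⁻¹) ^ (P + 1) = ((1 - u)⁻¹) ^ P * (1 - u)⁻¹ := pow_succ _ _
      rw [this]
      exact h3

theorem binom_summable_real {P : ℕ} (hP : 0 < P) {t : ℝ} (ht0 : 0 ≤ t) (ht : t < 1) :
    Summable fun k => ((P + k - 1).choose k : ℝ) * t ^ k := by
  have h1 : ‖((t:ℝ):ℂ)‖ < 1 := by simpa [abs_of_nonneg ht0] using ht
  have h2 := (binom_hasSum hP h1).summable
  have h3 : (fun k => (((P + k - 1).choose k : ℂ)) * ((t:ℝ):ℂ) ^ k)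
      = fun k => (((((P + k - 1).choose k : ℝ)) * t ^ k : ℝ) : ℂ) := by
    funext k; push_cast; ring
  rw [h3] at h2
  exact Complex.summable_ofReal.mp h2

end AuxSpecial

noncomputable section AuxFun
open Filter Finset

theorem tay_binom (P : ℕ) (hP : 0 < P) (n m : ℕ) :
    Tay (fun z => ((1 - (z + (n:ℂ))/((m:ℂ)+1))⁻¹)^P)
      (fun k => (((P + k - 1).choose k : ℂ)) / ((m:ℂ)+1)^k) (-(n:ℂ)) := by
  have hm : ((m:ℂ)+1) ≠ 0 := Nat.cast_add_one_ne_zero m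
  have hm1 : (1:ℝ) ≤ (m:ℝ) + 1 := by
    have : (0:ℝ) ≤ (m:ℝ) := Nat.cast_nonneg m
    linarith
  have hnorm : ‖(m:ℂ)+1‖ = (m:ℝ)+1 := by
    have : ((m:ℂ)+1) = ((m+1 : ℕ) : ℂ) := by push_cast; ring
    rw [this, Complex.norm_natCast]; push_cast; ring
  filter_upwards [Metric.ball_mem_nhds (0:ℂ) one_pos] with w hw
  have hw1 : ‖w‖ < 1 := by simpa [dist_zero_right] using hw
  have hu : ‖w / ((m:ℂ)+1)‖ < 1 := by
    rw [norm_div, hnorm, div_lt_one (by positivity)]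
    linarith
  constructor
  · have ht0 : (0:ℝ) ≤ ‖w‖ / ((m:ℝ)+1) := by positivity
    have ht1 : ‖w‖ / ((m:ℝ)+1) < 1 := by
      rw [div_lt_one (by positivity)]; linarith
    have := binom_summable_real hP ht0 ht1
    refine this.congr fun k => ?_
    rw [norm_div, norm_pow, hnorm, Complex.norm_natCast, div_pow]
    field_simp
  · have h := binom_hasSum hP hu
    have hfun : (fun k => (((P + k - 1).choose k : ℂ)) / ((m:ℂ)+1)^k * w ^ k)
        = fun k => (((P + k - 1).choose k : ℂ)) * (w / ((m:ℂ)+1)) ^ k := by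
      funext k; rw [div_pow]; ring
    show HasSum _ (((1 - (-(n:ℂ) + w + (n:ℂ))/((m:ℂ)+1))⁻¹)^P)
    rw [hfun, show (-(n:ℂ) + w + (n:ℂ)) = w from by ring]
    exact h

theorem tay_cpow (x : ℝ) (hx : 0 < x) (n : ℕ) :
    Tay (fun z => (x:ℂ) ^ (-z))
      (fun k => (x:ℂ)^(n:ℕ) * ((-(Real.log x : ℂ))^k / (k ! : ℂ))) (-(n:ℂ)) := by
  have hx0 : (x:ℂ) ≠ 0 := by
    simpa using ne_of_gt (show (0:ℝ) < x from hx)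
  set L : ℂ := (Real.log x : ℂ) with hL
  refine Filter.Eventually.of_forall fun w => ⟨?_, ?_⟩
  · have := (Real.summable_pow_div_factorial (‖L‖ * ‖w‖)).mul_left (x ^ n)
    refine this.congr fun k => ?_
    simp only [norm_mul, norm_div, norm_pow, norm_neg, Complex.norm_real,
      Real.norm_eq_abs, abs_of_pos hx, Complex.norm_natCast, mul_pow, hL]
    ring
  · have h1 : (x:ℂ) ^ (-(-(n:ℂ) + w)) = (x:ℂ)^(n:ℕ) * Complex.exp (-L * w) := by
      rw [Complex.cpow_def_of_ne_zero hx0, ← Complex.ofReal_log hx.le, ← hL]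
      rw [show L * -(-(n:ℂ) + w) = (n:ℂ) * L + -L * w from by ring, Complex.exp_add]
      congr 1
      rw [Complex.exp_nat_mul, hL, ← Complex.ofReal_exp, Real.exp_log hx]
    show HasSum _ ((x:ℂ) ^ (-(-(n:ℂ) + w)))
    rw [h1]
    have h2 : HasSum (fun k => (-L*w)^k / (k ! : ℂ)) (Complex.exp (-L*w)) := by
      rw [Complex.exp_eq_exp_ℂ]
      exact NormedSpace.expSeries_div_hasSum_exp (-L*w)
    have h3 := h2.mul_left ((x:ℂ)^(n:ℕ))
    have hfun : (fun k => (x:ℂ)^(n:ℕ) * ((-L)^k / (k ! : ℂ)) * w ^ k)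
        = fun k => (x:ℂ)^(n:ℕ) * ((-L*w)^k / (k ! : ℂ)) := by
      funext k; rw [mul_pow]; ring
    rw [hfun]
    exact h3

end AuxFun

noncomputable section AuxGamma
open Filter Finset

theorem tay_Gamma : Tay Complex.Gamma
    (fun k => iteratedDeriv k Complex.Gamma 1 / (k ! : ℂ)) 1 := by
  have hA : AnalyticAt ℂ Complex.Gamma 1 := by
    apply DifferentiableOn.analyticAt (s := Metric.ball (1:ℂ) (1/2))
    · intro z hz
      refine (Complex.differentiableAt_Gamma z ?_).differentiableWithinAt
      intro m hm
      rw [Metric.mem_ball, dist_eq_norm] at hz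
      have hre : |(z - 1).re| ≤ ‖z - 1‖ := Complex.abs_re_le_norm _
      rw [hm] at hz hre
      simp only [Complex.sub_re, Complex.neg_re, Complex.natCast_re, Complex.one_re] at hre
      have : ‖(-(m:ℂ) - 1)‖ < 1/2 := hz
      have h2 : |(-(m:ℝ) - 1)| ≤ ‖(-(m:ℂ) - 1)‖ := by
        simpa using hre
      have h3 : (1:ℝ) ≤ |(-(m:ℝ) - 1)| := by
        have hm0 : (0:ℝ) ≤ (m:ℝ) := Nat.cast_nonneg m
        rw [abs_of_nonpos (by linarith)]
        linarith
      linarith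
    · exact Metric.ball_mem_nhds _ (by norm_num)
  obtain ⟨p, hp⟩ := hA
  have ht := hp.tay
  have hc : (fun k => iteratedDeriv k Complex.Gamma 1 / (k ! : ℂ)) = p.coeff := by
    funext k
    rw [ht.iteratedDeriv_eq k, mul_div_cancel_left₀]
    exact Nat.cast_ne_zero.mpr k.factorial_ne_zero
  rw [hc]
  exact ht

theorem Tay.translate {f : ℂ → ℂ} {a : ℕ → ℂ} {c : ℂ} (h : Tay f a c) (d : ℂ) :
    Tay (fun z => f (z + d)) a (c - d) := by
  filter_upwards [h] with w hw
  refine ⟨hw.1, ?_⟩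
  show HasSum _ (f (c - d + w + d))
  rw [show c - d + w + d = c + w from by ring]
  exact hw.2

theorem Gamma_shift : ∀ (n : ℕ) (z : ℂ), (∀ j : ℕ, j ≤ n → z + (j:ℂ) ≠ 0) →
    Complex.Gamma (z + ((n:ℕ) + 1 : ℕ)) = (∏ j ∈ Finset.range (n+1), (z + (j:ℂ))) * Complex.Gamma z := by
  intro n
  induction n with
  | zero =>
    intro z h
    have h0 : z ≠ 0 := by simpa using h 0 le_rfl
    simpa using Complex.Gamma_add_one z h0
  | succ n ih =>
    intro z h
    have h1 : z + (((n:ℕ)+1 : ℕ):ℂ) ≠ 0 := h (n+1) le_rfl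
    have e1 : z + ((n+1+1 : ℕ) : ℂ) = (z + (((n:ℕ)+1:ℕ):ℂ)) + 1 := by push_cast; ring
    rw [e1, Complex.Gamma_add_one _ h1, ih z (fun j hj => h j (by omega)),
      Finset.prod_range_succ (fun j => z + (j:ℂ)) (n+1)]
    ring

theorem prod_shift (n : ℕ) (z : ℂ) :
    ∏ j ∈ Finset.range n, (z + (j:ℂ)) = ∏ m ∈ Finset.range n, ((z + (n:ℂ)) - ((m:ℂ)+1)) := by
  have := Finset.prod_range_reflect (fun m => (z + (n:ℂ)) - ((m:ℂ)+1)) n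
  rw [← this]
  refine Finset.prod_congr rfl fun j hj => ?_
  have hj' : j < n := Finset.mem_range.mp hj
  have hcast : ((n - 1 - j : ℕ) : ℂ) = (n:ℂ) - 1 - (j:ℂ) := by
    have e : n - 1 - j = n - (1 + j) := by omega
    rw [e, Nat.cast_sub (by omega)]
    push_cast; ring
  rw [hcast]
  ring

theorem prod_fact (n : ℕ) : ∏ m ∈ Finset.range n, ((m:ℂ)+1) = (n ! : ℂ) := by
  induction n with
  | zero => simp
  | succ n ih =>
    rw [Finset.prod_range_succ, ih, Nat.factorial_succ]
    push_cast; ring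

end AuxGamma

noncomputable section AuxKey
open Filter Finset

theorem tay_R (P n : ℕ) (hP : 0 < P) :
    ∀ N, Tay (fun z => ∏ m ∈ Finset.range N, ((1 - (z + (n:ℂ))/((m:ℂ)+1))⁻¹)^P)
      (rSeq P N) (-(n:ℂ))
  | 0 => by simpa [rSeq, Finset.prod_range_zero] using Tay.one (-(n:ℂ))
  | (N+1) => by
      have h1 := tay_R P n hP N
      have h2 := tay_binom P hP n N
      have h3 := h1.mul h2
      have : rSeq P (N+1) = dconv (rSeq P N)
          (fun k => ((P + k - 1).choose k : ℂ) / ((N : ℂ) + 1) ^ k) := rfl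
      rw [this]
      have hfun : (fun z => ∏ m ∈ Finset.range (N+1), ((1 - (z + (n:ℂ))/((m:ℂ)+1))⁻¹)^P)
          = fun z => (∏ m ∈ Finset.range N, ((1 - (z + (n:ℂ))/((m:ℂ)+1))⁻¹)^P)
              * ((1 - (z + (n:ℂ))/((N:ℂ)+1))⁻¹)^P := by
        funext z; rw [Finset.prod_range_succ]
      rw [hfun]
      exact h3

theorem key_identity (n : ℕ) (z : ℂ) (hz : ∀ j : ℕ, j ≤ n → z + (j:ℂ) ≠ 0) :
    Complex.Gamma (z + (n:ℂ) + 1)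
      = (∏ m ∈ Finset.range n, (1 - (z + (n:ℂ))/((m:ℂ)+1)))
        * ((-1:ℂ)^n * (n ! :ℂ) * ((z + (n:ℂ)) * Complex.Gamma z)) := by
  have hfac : ((n !:ℕ) : ℂ) ≠ 0 := Nat.cast_ne_zero.mpr n.factorial_ne_zero
  have e1 : ∏ m ∈ Finset.range n, (1 - (z + (n:ℂ))/((m:ℂ)+1))
      = ((-1:ℂ)^n * ∏ j ∈ Finset.range n, (z + (j:ℂ))) / (n ! : ℂ) := by
    have hstep : ∀ m ∈ Finset.range n, (1 - (z + (n:ℂ))/((m:ℂ)+1))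
        = (-1:ℂ) * ((z + (n:ℂ)) - ((m:ℂ)+1)) / ((m:ℂ)+1) := by
      intro m _
      have hm : ((m:ℂ)+1) ≠ 0 := Nat.cast_add_one_ne_zero m
      field_simp
      ring
    rw [Finset.prod_congr rfl hstep, Finset.prod_div_distrib, Finset.prod_mul_distrib,
      Finset.prod_const, Finset.card_range, prod_fact, ← prod_shift]
  have hG : Complex.Gamma (z + (n:ℂ) + 1)
      = (∏ j ∈ Finset.range n, (z + (j:ℂ))) * ((z + (n:ℂ)) * Complex.Gamma z) := by
    have h1 := Gamma_shift n z hz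
    have e2 : z + (((n:ℕ) + 1 : ℕ) : ℂ) = z + (n:ℂ) + 1 := by push_cast; ring
    rw [e2] at h1
    rw [h1, Finset.prod_range_succ]
    ring
  have hsq : ((-1:ℂ)^n) * ((-1:ℂ)^n) = 1 := by
    rw [← mul_pow]; norm_num
  rw [hG, e1, div_mul_eq_mul_div, eq_div_iff hfac]
  linear_combination (-((∏ j ∈ Finset.range n, (z + (j:ℂ))) * (z + (n:ℂ)) * Complex.Gamma z
    * (n ! : ℂ))) * hsq

end AuxKey


/-- For fixed `x > 0` and a positive integer `P`, the function `z ↦ Γ(z)^P x^{-z}` has a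
pole of order `P` at `z = -n` (i.e. it equals `G z / (z+n)^P` near `-n` for an analytic
`G` with `G(-n) ≠ 0`), and its residue `G^{(P-1)}(-n)/(P-1)!` there equals
`((-1)^{Pn}/(n!)^P) · xⁿ · (ℓ(x) ⋆ r(n) ⋆ q)_{P-1}`, where `ℓ_k(x) = (-log x)^k/k!`. -/
theorem gamma_pow_residue (x : ℝ) (hx : 0 < x) (P n : ℕ) (hP : 0 < P) :
    ∃ G : ℂ → ℂ, AnalyticAt ℂ G (-(n : ℂ)) ∧ G (-(n : ℂ)) ≠ 0 ∧
      (∀ᶠ z in nhdsWithin (-(n : ℂ)) {(-(n : ℂ))}ᶜ,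
        Complex.Gamma z ^ P * (x : ℂ) ^ (-z) = G z / (z + (n : ℂ)) ^ P) ∧
      iteratedDeriv (P - 1) G (-(n : ℂ)) / ((P - 1)! : ℂ) =
        ((-1 : ℂ) ^ (P * n) / ((n ! : ℂ)) ^ P) * (x : ℂ) ^ (n : ℕ) *
          dconv (fun k => (-(Real.log x : ℂ)) ^ k / (k ! : ℂ))
            (dconv (rSeq P n) (qSeq P)) (P - 1) := by
  have hx0 : (x:ℂ) ≠ 0 := by simpa using ne_of_gt hx
  have hfac : ((n !:ℕ) : ℂ) ≠ 0 := Nat.cast_ne_zero.mpr n.factorial_ne_zero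
  set s : ℂ := ((-1 : ℂ) ^ (P * n) / ((n ! : ℂ)) ^ P) with hs
  have hs0 : s ≠ 0 := by
    rw [hs]
    exact div_ne_zero (pow_ne_zero _ (by norm_num)) (pow_ne_zero _ hfac)
  set L : ℂ := (Real.log x : ℂ) with hL
  -- the three factors
  set E : ℂ → ℂ := fun z => (x:ℂ) ^ (-z) with hE
  set R : ℂ → ℂ := fun z => ∏ m ∈ Finset.range n, ((1 - (z + (n:ℂ))/((m:ℂ)+1))⁻¹)^P with hR
  set Q : ℂ → ℂ := fun z => Complex.Gamma (z + ((n:ℂ)+1)) ^ P with hQ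
  -- Taylor expansions
  have hTE : Tay E (fun k => (x:ℂ)^(n:ℕ) * ((-L)^k / (k ! : ℂ))) (-(n:ℂ)) := tay_cpow x hx n
  have hTR : Tay R (rSeq P n) (-(n:ℂ)) := tay_R P n hP n
  have hTQ : Tay Q (qSeq P) (-(n:ℂ)) := by
    have hg := tay_Gamma.translate ((n:ℂ)+1)
    rw [show (1:ℂ) - ((n:ℂ)+1) = -(n:ℂ) from by ring] at hg
    exact hg.pow P
  have hTG : Tay (fun z => s * (E z * (R z * Q z)))
      (fun k => s * dconv (fun k => (x:ℂ)^(n:ℕ) * ((-L)^k / (k ! : ℂ)))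
        (dconv (rSeq P n) (qSeq P)) k) (-(n:ℂ)) :=
    (hTE.mul (hTR.mul hTQ)).const_mul s
  refine ⟨fun z => s * (E z * (R z * Q z)), hTG.analyticAt, ?_, ?_, ?_⟩
  · -- nonvanishing at -n
    have hRc : R (-(n:ℂ)) = 1 := by
      rw [hR]
      simp
    have hQc : Q (-(n:ℂ)) = 1 := by
      rw [hQ]
      simp only []
      rw [show -(n:ℂ) + ((n:ℂ)+1) = 1 from by ring, Complex.Gamma_one, one_pow]
    have hEc : E (-(n:ℂ)) ≠ 0 := by
      rw [hE]
      simp only []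
      rw [Ne, Complex.cpow_eq_zero_iff]
      tauto
    simp only [hRc, hQc, mul_one]
    exact mul_ne_zero hs0 hEc
  · -- eventual equality on punctured neighborhood
    have hball : ∀ᶠ z in nhds (-(n:ℂ)), ‖z + (n:ℂ)‖ < 1/2 := by
      have := Metric.ball_mem_nhds (-(n:ℂ)) (show (0:ℝ) < 1/2 by norm_num)
      filter_upwards [this] with z hz
      rw [Metric.mem_ball, dist_eq_norm, sub_neg_eq_add] at hz
      exact hz
    filter_upwards [eventually_nhdsWithin_of_eventually_nhds hball,
      self_mem_nhdsWithin] with z h1 h2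
    have hw0 : z + (n:ℂ) ≠ 0 := by
      intro h
      apply h2
      simp only [Set.mem_compl_iff, Set.mem_singleton_iff] at *
      linear_combination h
    have hz : ∀ j : ℕ, j ≤ n → z + (j:ℂ) ≠ 0 := by
      intro j hj h0
      rcases eq_or_lt_of_le hj with rfl | hlt
      · exact hw0 h0
      · have hzn : z + (n:ℂ) = ((n - j : ℕ) : ℂ) := by
          rw [Nat.cast_sub hj]
          linear_combination h0
        have : ‖z + (n:ℂ)‖ = ((n - j : ℕ) : ℝ) := by
          rw [hzn, Complex.norm_natCast]
        have hge : (1:ℝ) ≤ ((n - j : ℕ) : ℝ) := by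
          have : 1 ≤ n - j := by omega
          exact_mod_cast this
        rw [this] at h1
        linarith
    -- key computation
    set A : ℂ := ∏ m ∈ Finset.range n, (1 - (z + (n:ℂ))/((m:ℂ)+1)) with hA
    set B : ℂ := (-1:ℂ)^n * (n ! :ℂ) * ((z + (n:ℂ)) * Complex.Gamma z) with hB
    have hkey : Complex.Gamma (z + (n:ℂ) + 1) = A * B := key_identity n z hz
    have hA0 : A ≠ 0 := by
      rw [hA]
      rw [Finset.prod_ne_zero_iff]
      intro m hm
      have hm1 : ((m:ℂ)+1) ≠ 0 := Nat.cast_add_one_ne_zero m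
      intro h0
      have : (1 - (z + (n:ℂ))/((m:ℂ)+1)) * ((m:ℂ)+1) = ((m:ℂ)+1) - (z + (n:ℂ)) := by
        field_simp
      rw [h0, zero_mul] at this
      have hmz : ((m:ℂ)+1) = z + (n:ℂ) := by linear_combination -this
      have hmlt : m < n := Finset.mem_range.mp hm
      have : ‖z + (n:ℂ)‖ = (m:ℝ) + 1 := by
        rw [← hmz]
        have : ((m:ℂ)+1) = ((m+1 : ℕ) : ℂ) := by push_cast; ring
        rw [this, Complex.norm_natCast]
        push_cast; ring
      rw [this] at h1
      have : (0:ℝ) ≤ (m:ℝ) := Nat.cast_nonneg m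
      linarith
    have hRz : R z = (A⁻¹)^P := by
      rw [hR, hA]
      simp only []
      rw [Finset.prod_pow, Finset.prod_inv_distrib]
    have hQz : Q z = (A * B)^P := by
      rw [hQ]
      simp only []
      rw [show z + ((n:ℂ)+1) = z + (n:ℂ) + 1 from by ring, hkey]
    have hone : s * ((-1:ℂ))^(n*P) * ((n !:ℕ):ℂ)^P = 1 := by
      rw [hs]
      have hsq : ((-1:ℂ))^(P*n) * ((-1:ℂ))^(n*P) = 1 := by
        rw [mul_comm n P, ← mul_pow]
        norm_num
      field_simp
      linear_combination hsq
    have hG : s * (E z * (R z * Q z)) = E z * ((z + (n:ℂ))^P * Complex.Gamma z ^ P) := by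
      rw [hRz, hQz]
      have h5 : (A⁻¹)^P * (A*B)^P = B^P := by
        rw [← mul_pow, inv_mul_cancel_left₀ hA0]
      rw [h5, hB, mul_pow, mul_pow, ← pow_mul, mul_pow (z + (n:ℂ)) (Complex.Gamma z) P]
      linear_combination (E z * ((z + (n:ℂ))^P * Complex.Gamma z ^ P)) * hone
    show Complex.Gamma z ^ P * (x:ℂ)^(-z) = s * (E z * (R z * Q z)) / (z + (n:ℂ))^P
    rw [eq_div_iff (pow_ne_zero P hw0), hG, hE]
    ring
  · -- residue value
    rw [hTG.iteratedDeriv_eq (P-1)]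
    have hconv : dconv (fun k => (x:ℂ)^(n:ℕ) * ((-L)^k / (k ! : ℂ)))
          (dconv (rSeq P n) (qSeq P)) (P-1)
        = (x:ℂ)^(n:ℕ) * dconv (fun k => (-L)^k / (k ! : ℂ))
            (dconv (rSeq P n) (qSeq P)) (P-1) := by
      rw [dconv, dconv, Finset.mul_sum]
      exact Finset.sum_congr rfl fun j _ => by ring
    have hfac2 : (((P-1)! : ℕ):ℂ) ≠ 0 := Nat.cast_ne_zero.mpr (P-1).factorial_ne_zero
    rw [hconv, mul_comm ((((P-1)!) : ℕ):ℂ) _, mul_div_cancel_right₀ _ hfac2]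
    ring
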